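/- The fan symmetry c = (1 2)(3 5)(4 6) of V_{(2,29)} is generically not realized by a torus action: if λ1,…,λ7 ∈ ℂ* satisfy λ1 λ5 λ6 ≠ λ2 λ3 λ4, then there exist no s1, s2, s3, s4 ∈ ℂ* and μ ∈ ℂ* such that f(λ1,…,λ7; s1 t1, s2 t2, s3 t3, s4 t4) = μ · f(λ2, λ1, λ5, λ6, λ3, λ4, λ7; t1, t2, t3, t4) for all (t1,t2,t3,t4) ∈ (ℂ*)⁴. Consequently the quotient map from simplified to polynomial moduli of V_{(2,29)} has generic degree 2. -/
import Mathlib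


/-- The generic anticanonical Laurent polynomial of the family `V_{(2,29)}`:
`f(λ; t) = λ1 t1 + λ2 t2 + λ3 t3 + λ4 t2⁻¹ t3⁻¹ + λ5 t1 t2 t3² t4³
          + λ6 t1⁻² t2⁻¹ t3⁻² t4⁻³ + λ7`. -/
noncomputable def anticanPoly (lam : Fin 7 → ℂ) (t : Fin 4 → ℂ) : ℂ :=
  lam 0 * t 0 + lam 1 * t 1 + lam 2 * t 2 + lam 3 * (t 1)⁻¹ * (t 2)⁻¹ +
    lam 4 * t 0 * t 1 * (t 2)^2 * (t 3)^3 +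
    lam 5 * ((t 0)^2)⁻¹ * (t 1)⁻¹ * ((t 2)^2)⁻¹ * ((t 3)^3)⁻¹ + lam 6

set_option maxHeartbeats 1000000 in
/-- The fan symmetry `c = (1 2)(3 5)(4 6)` of `V_{(2,29)}` is generically not realized
by a torus action: if `λ1 λ5 λ6 ≠ λ2 λ3 λ4` then no rescaling of the torus coordinates
transforms `f(λ; ·)` into a scalar multiple of `f(c·λ; ·)`. Consequently the quotient
map from simplified to polynomial moduli of `V_{(2,29)}` has generic degree 2. -/
theorem V229_fan_symmetry_c_not_torus_action
    (l1 l2 l3 l4 l5 l6 l7 : ℂ)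
    (h1 : l1 ≠ 0) (h2 : l2 ≠ 0) (h3 : l3 ≠ 0) (h4 : l4 ≠ 0)
    (h5 : l5 ≠ 0) (h6 : l6 ≠ 0) (h7 : l7 ≠ 0)
    (hne : l1 * l5 * l6 ≠ l2 * l3 * l4) :
    ¬ ∃ s1 s2 s3 s4 μ : ℂ, s1 ≠ 0 ∧ s2 ≠ 0 ∧ s3 ≠ 0 ∧ s4 ≠ 0 ∧ μ ≠ 0 ∧
      ∀ t : Fin 4 → ℂ, (∀ i, t i ≠ 0) →
        anticanPoly ![l1, l2, l3, l4, l5, l6, l7]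
            ![s1 * t 0, s2 * t 1, s3 * t 2, s4 * t 3]
          = μ * anticanPoly ![l2, l1, l5, l6, l3, l4, l7] ![t 0, t 1, t 2, t 3] := by
  rintro ⟨s1, s2, s3, s4, μ, hs1, hs2, hs3, hs4, hμ, h⟩
  have e1 := h ![1,1,1,1] (by intro i; fin_cases i <;> norm_num)
  have em := h ![1,1,1,-1] (by intro i; fin_cases i <;> norm_num)
  have e2 := h ![1,1,1,2] (by intro i; fin_cases i <;> norm_num)
  have f2 := h ![2,1,1,1] (by intro i; fin_cases i <;> norm_num)
  have g2 := h ![1,2,1,1] (by intro i; fin_cases i <;> norm_num)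
  have gm := h ![1,-1,1,1] (by intro i; fin_cases i <;> norm_num)
  have k2 := h ![1,1,2,1] (by intro i; fin_cases i <;> norm_num)
  simp only [anticanPoly, Matrix.cons_val_zero, Matrix.cons_val_one, Matrix.head_cons,
    Matrix.cons_val_two, Matrix.tail_cons, Matrix.cons_val_three, Matrix.cons_val_four,
    Matrix.cons_val_fin_one,
    show (![l1, l2, l3, l4, l5, l6, l7] : Fin 7 → ℂ) 5 = l6 from rfl,
    show (![l1, l2, l3, l4, l5, l6, l7] : Fin 7 → ℂ) 6 = l7 from rfl,
    show (![l2, l1, l5, l6, l3, l4, l7] : Fin 7 → ℂ) 5 = l4 from rfl,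
    show (![l2, l1, l5, l6, l3, l4, l7] : Fin 7 → ℂ) 6 = l7 from rfl] at e1 em e2 f2 g2 gm k2
  have hE : l5*s1*s2*s3^2*s4^3 = μ*l3 := by
    linear_combination (-1/14 : ℂ)*e1 - (1/18 : ℂ)*em + (8/63 : ℂ)*e2
  have hF : l6*(s1^2)⁻¹*s2⁻¹*(s3^2)⁻¹*(s4^3)⁻¹ = μ*l4 := by
    linear_combination (4/7 : ℂ)*e1 - (4/9 : ℂ)*em - (8/63 : ℂ)*e2
  have hS : l1*s1 + l2*s2 + l3*s3 + l4*s2⁻¹*s3⁻¹ + l7 = μ*(l2 + l1 + l5 + l6 + l7) := by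
    linear_combination (1/2 : ℂ)*e1 + (1/2 : ℂ)*em
  have hA : l1*s1 = μ*l2 := by
    linear_combination f2 - 2*hE - (1/4 : ℂ)*hF - hS
  have hB : l2*s2 = μ*l1 := by
    linear_combination (-1/6 : ℂ)*gm + (2/3 : ℂ)*g2 - (3/2 : ℂ)*hE - (1/2 : ℂ)*hF - (1/2 : ℂ)*hS
  have hD : l4*s2⁻¹*s3⁻¹ = μ*l6 := by
    linear_combination (-1/3 : ℂ)*gm - (2/3 : ℂ)*g2 + hE + hS
  have hC : l3*s3 = μ*l5 := by
    linear_combination k2 + (1/2 : ℂ)*hD - 4*hE - (1/4 : ℂ)*hF - hS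
  have hG : l7 = μ*l7 := by
    linear_combination hS - hA - hB - hC - hD
  have hμ1 : μ = 1 := by
    have h70 : (μ - 1) * l7 = 0 := by linear_combination -hG
    rcases mul_eq_zero.mp h70 with h' | h'
    · exact sub_eq_zero.mp h'
    · exact absurd h' h7
  subst hμ1
  have j2 : s2 * s2⁻¹ = 1 := mul_inv_cancel₀ hs2
  have j3 : s3 * s3⁻¹ = 1 := mul_inv_cancel₀ hs3
  apply hne
  linear_combination (-(l5*l6))*hB + (-(l2*s2*l6))*hC + (-(l2*s2*l3*s3))*hD +
    (l2*l3*l4*s2*s2⁻¹)*j3 + (l2*l3*l4)*j2
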